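/- Let n ≥ 1 and N ≥ 1 be integers, B > 0, and let ξ₁, …, ξ_n be independent Rademacher random variables (each uniform on {−1, +1}). Let a⁽¹⁾, …, a⁽ᴺ⁾ be fixed vectors in ℝⁿ with entries a⁽ʲ⁾ᵢ ∈ [0, 4B²] for all i, j. Then E[ max_{1 ≤ j ≤ N} ( (3/n)·Σ_{i=1}^{n} ξᵢ·a⁽ʲ⁾ᵢ − (1/(4B²n))·Σ_{i=1}^{n} (a⁽ʲ⁾ᵢ)² ) ] ≤ 18B²·(log N + 1)/n. -/

import Mathlib

open MeasureTheory ProbabilityTheory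

noncomputable section


lemma rademacher_eq_indicator {Ω : Type*} (X : Ω → ℝ)
    (hv : ∀ ω, X ω = 1 ∨ X ω = -1) :
    X = fun ω => 2 * Set.indicator {ω | X ω = 1} (fun _ => (1:ℝ)) ω - 1 := by
  funext ω
  by_cases h : X ω = 1
  · simp only [Set.mem_setOf_eq, h, Set.indicator_of_mem]; norm_num
  · rcases hv ω with h1 | h1
    · exact absurd h1 h
    · simp only [Set.indicator_apply, Set.mem_setOf_eq, h, if_false, h1]; norm_num

lemma rademacher_integrable {Ω : Type*} [MeasureSpace Ω] [IsProbabilityMeasure (ℙ : Measure Ω)]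
    (X : Ω → ℝ) (hm : Measurable X) (hv : ∀ ω, X ω = 1 ∨ X ω = -1) :
    Integrable X (ℙ : Measure Ω) := by
  have hA : MeasurableSet {ω | X ω = 1} := hm (measurableSet_singleton 1)
  rw [rademacher_eq_indicator X hv]
  exact ((((integrable_const (1:ℝ)).indicator hA).const_mul 2).sub (integrable_const 1))

lemma rademacher_integral_zero {Ω : Type*} [MeasureSpace Ω] [IsProbabilityMeasure (ℙ : Measure Ω)]
    (X : Ω → ℝ) (hm : Measurable X) (hv : ∀ ω, X ω = 1 ∨ X ω = -1)
    (hs : (ℙ : Measure Ω) {ω | X ω = 1} = 1/2) :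
    ∫ ω, X ω ∂(ℙ : Measure Ω) = 0 := by
  have hA : MeasurableSet {ω | X ω = 1} := hm (measurableSet_singleton 1)
  have h := rademacher_eq_indicator X hv
  calc ∫ ω, X ω ∂(ℙ : Measure Ω)
      = ∫ ω, (2 * Set.indicator {ω | X ω = 1} (fun _ => (1:ℝ)) ω - 1) ∂(ℙ : Measure Ω) := by
        rw [← h]
    _ = 0 := by
        rw [integral_sub (((integrable_const (1:ℝ)).indicator hA).const_mul 2) (integrable_const 1),
          integral_const_mul, integral_indicator_const _ hA, integral_const]
        simp [Measure.real, hs]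

lemma rademacher_exp_eq {Ω : Type*} (X : Ω → ℝ) (hv : ∀ ω, X ω = 1 ∨ X ω = -1) (c : ℝ) :
    ∀ ω, Real.exp (c * X ω) = Real.cosh c + Real.sinh c * X ω := by
  intro ω
  rcases hv ω with h | h <;> rw [h]
  · rw [mul_one, mul_one, Real.cosh_add_sinh]
  · rw [mul_neg_one, mul_neg_one, ← sub_eq_add_neg, Real.cosh_sub_sinh]

lemma rademacher_exp_integrable {Ω : Type*} [MeasureSpace Ω]
    [IsProbabilityMeasure (ℙ : Measure Ω)]
    (X : Ω → ℝ) (hm : Measurable X) (hv : ∀ ω, X ω = 1 ∨ X ω = -1) (c : ℝ) :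
    Integrable (fun ω => Real.exp (c * X ω)) (ℙ : Measure Ω) := by
  have := rademacher_exp_eq X hv c
  refine Integrable.congr ?_ (Filter.Eventually.of_forall fun ω => (this ω).symm)
  exact (integrable_const _).add ((rademacher_integrable X hm hv).const_mul _)

lemma rademacher_exp_integral {Ω : Type*} [MeasureSpace Ω] [IsProbabilityMeasure (ℙ : Measure Ω)]
    (X : Ω → ℝ) (hm : Measurable X) (hv : ∀ ω, X ω = 1 ∨ X ω = -1)
    (hs : (ℙ : Measure Ω) {ω | X ω = 1} = 1/2) (c : ℝ) :
    ∫ ω, Real.exp (c * X ω) ∂(ℙ : Measure Ω) = Real.cosh c := by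
  have heq := rademacher_exp_eq X hv c
  calc ∫ ω, Real.exp (c * X ω) ∂(ℙ : Measure Ω)
      = ∫ ω, (Real.cosh c + Real.sinh c * X ω) ∂(ℙ : Measure Ω) :=
        integral_congr_ae (Filter.Eventually.of_forall heq)
    _ = Real.cosh c := by
        rw [integral_add (integrable_const _) ((rademacher_integrable X hm hv).const_mul _),
          integral_const_mul, rademacher_integral_zero X hm hv hs, integral_const]
        simp

/-- finite-class offset Rademacher complexity bound, equation
(eq:lemma:generalization:1:4) in the proof of Lemma I.1 of the paper. If
`ξ₁, …, ξ_n` are independent Rademacher variables and `a⁽¹⁾, …, a⁽ᴺ⁾ ∈ ℝⁿ` are fixed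
vectors with entries in `[0, 4B²]`, then
`E[max_j ((3/n) ∑ᵢ ξᵢ a⁽ʲ⁾ᵢ - (1/(4B²n)) ∑ᵢ (a⁽ʲ⁾ᵢ)²)] ≤ 18B²(log N + 1)/n`. -/
theorem offset_rademacher_finite_class_bound
    {Ω : Type*} [MeasureSpace Ω] [IsProbabilityMeasure (ℙ : Measure Ω)]
    {n N : ℕ} (hn : 1 ≤ n) (hN : 1 ≤ N)
    (B : ℝ) (hB : 0 < B)
    (ξ : Fin n → Ω → ℝ) (hmeas : ∀ i, Measurable (ξ i))
    (hval : ∀ i ω, ξ i ω = 1 ∨ ξ i ω = -1)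
    (hsym : ∀ i, (ℙ : Measure Ω) {ω | ξ i ω = 1} = 1 / 2)
    (hindep : iIndepFun ξ (ℙ : Measure Ω))
    (a : Fin N → Fin n → ℝ)
    (ha : ∀ j i, a j i ∈ Set.Icc (0 : ℝ) (4 * B ^ 2)) :
    (∫ ω, (⨆ j, ((3 / (n : ℝ)) * ∑ i, ξ i ω * a j i
        - (1 / (4 * B ^ 2 * (n : ℝ))) * ∑ i, (a j i) ^ 2)) ∂(ℙ : Measure Ω))
      ≤ 18 * B ^ 2 * (Real.log N + 1) / n := by
  haveI : Nonempty (Fin N) := ⟨⟨0, hN⟩⟩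
  have hn0 : (0:ℝ) < n := by exact_mod_cast hn
  have hN0 : (0:ℝ) < N := by exact_mod_cast hN
  have hB2 : (0:ℝ) < B ^ 2 := by positivity
  have hlogN : (0:ℝ) ≤ Real.log N := Real.log_nonneg (by exact_mod_cast hN)
  set t0 : ℝ := (n:ℝ) / (18 * B ^ 2) with ht0def
  have ht0 : 0 < t0 := by positivity
  set Z : Fin N → Ω → ℝ := fun j ω => (3 / (n : ℝ)) * ∑ i, ξ i ω * a j i
        - (1 / (4 * B ^ 2 * (n : ℝ))) * ∑ i, (a j i) ^ 2 with hZdef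
  set G : Ω → ℝ := fun ω => ∑ j, Real.exp (t0 * Z j ω) with hGdef
  -- per-class MGF bound
  have hj : ∀ j : Fin N, Integrable (fun ω => Real.exp (t0 * Z j ω)) (ℙ : Measure Ω) ∧
      (∫ ω, Real.exp (t0 * Z j ω) ∂(ℙ : Measure Ω)) ≤ 1 := by
    intro j
    set c : Fin n → ℝ := fun i => a j i / (6 * B ^ 2) with hc
    set Y : Fin n → Ω → ℝ := fun i ω => c i * ξ i ω with hY
    have hYmeas : ∀ i, Measurable (Y i) := fun i => (hmeas i).const_mul _
    have hYindep : iIndepFun Y (ℙ : Measure Ω) :=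
      hindep.comp (fun i => fun x => c i * x) (fun i => measurable_const_mul _)
    have hYint : ∀ i ∈ Finset.univ, Integrable (fun ω => Real.exp (1 * Y i ω)) (ℙ : Measure Ω) := by
      intro i _
      refine (rademacher_exp_integrable (ξ i) (hmeas i) (hval i) (c i)).congr
        (Filter.Eventually.of_forall fun ω => ?_)
      simp [hY]
    set K : ℝ := ∑ i, (c i) ^ 2 / 2 with hK
    have hident : ∀ ω, Real.exp (t0 * Z j ω)
        = Real.exp (-K) * Real.exp (1 * (∑ i, Y i) ω) := by
      intro ω
      rw [← Real.exp_add]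
      congr 1
      have hsum : (∑ i, Y i) ω = ∑ i, c i * ξ i ω := by
        simp [hY, Finset.sum_apply]
      rw [hsum, hZdef, hK, one_mul]
      simp only [hc]
      rw [ht0def]
      have e1 : ∑ i, (a j i / (6 * B ^ 2)) ^ 2 / 2
          = (∑ i, (a j i) ^ 2) / (72 * B ^ 4) := by
        rw [Finset.sum_div]
        refine Finset.sum_congr rfl fun i _ => by
          rw [div_pow, div_div]
          congr 1
          ring
      have e2 : ∑ i, a j i / (6 * B ^ 2) * ξ i ω
          = (∑ i, ξ i ω * a j i) / (6 * B ^ 2) := by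
        rw [Finset.sum_div]
        exact Finset.sum_congr rfl fun i _ => by ring
      rw [e1, e2]
      field_simp
      ring
    have hSint : Integrable (fun ω => Real.exp ((1:ℝ) * (∑ i, Y i) ω)) (ℙ : Measure Ω) :=
      hYindep.integrable_exp_mul_sum hYmeas hYint
    constructor
    · exact (hSint.const_mul (Real.exp (-K))).congr
        (Filter.Eventually.of_forall fun ω => (hident ω).symm)
    · have hmgf : ∀ i : Fin n, mgf (Y i) (ℙ : Measure Ω) 1 = Real.cosh (c i) := by
        intro i
        rw [mgf]
        rw [show (fun ω => Real.exp (1 * Y i ω)) = fun ω => Real.exp (c i * ξ i ω) by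
          funext ω; simp [hY]]
        exact rademacher_exp_integral (ξ i) (hmeas i) (hval i) (hsym i) (c i)
      calc (∫ ω, Real.exp (t0 * Z j ω) ∂(ℙ : Measure Ω))
          = ∫ ω, Real.exp (-K) * Real.exp (1 * (∑ i, Y i) ω) ∂(ℙ : Measure Ω) :=
            integral_congr_ae (Filter.Eventually.of_forall hident)
        _ = Real.exp (-K) * ∫ ω, Real.exp (1 * (∑ i, Y i) ω) ∂(ℙ : Measure Ω) :=
            integral_const_mul _ _
        _ = Real.exp (-K) * ∏ i, mgf (Y i) (ℙ : Measure Ω) 1 := by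
            rw [← hYindep.mgf_sum hYmeas Finset.univ]
            rfl
        _ ≤ Real.exp (-K) * Real.exp K := by
            refine mul_le_mul_of_nonneg_left ?_ (Real.exp_pos _).le
            calc ∏ i, mgf (Y i) (ℙ : Measure Ω) 1
                = ∏ i, Real.cosh (c i) := by
                  exact Finset.prod_congr rfl fun i _ => hmgf i
              _ ≤ ∏ i, Real.exp ((c i) ^ 2 / 2) :=
                  Finset.prod_le_prod (fun i _ => (Real.cosh_pos (c i)).le)
                    (fun i _ => Real.cosh_le_exp_half_sq _)
              _ = Real.exp K := by rw [hK, ← Real.exp_sum]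
        _ = 1 := by rw [← Real.exp_add]; simp
  have hGint : Integrable G (ℙ : Measure Ω) :=
    integrable_finset_sum _ (fun j _ => (hj j).1)
  have hGle : (∫ ω, G ω ∂(ℙ : Measure Ω)) ≤ N := by
    rw [hGdef]
    rw [integral_finset_sum _ (fun j _ => (hj j).1)]
    calc ∑ j : Fin N, ∫ ω, Real.exp (t0 * Z j ω) ∂(ℙ : Measure Ω)
        ≤ ∑ _j : Fin N, (1:ℝ) := Finset.sum_le_sum fun j _ => (hj j).2
      _ = N := by simp
  have hGpos : ∀ ω, 0 < G ω := fun ω =>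
    Finset.sum_pos (fun j _ => Real.exp_pos _) Finset.univ_nonempty
  have hpt : ∀ ω, (⨆ j, Z j ω) ≤ t0⁻¹ * (G ω / N + (Real.log N - 1)) := by
    intro ω
    refine ciSup_le fun j => ?_
    have h1 : t0 * Z j ω ≤ Real.log (G ω) := by
      calc t0 * Z j ω = Real.log (Real.exp (t0 * Z j ω)) := (Real.log_exp _).symm
        _ ≤ Real.log (G ω) := Real.log_le_log (Real.exp_pos _)
            (Finset.single_le_sum (fun k _ => (Real.exp_pos (t0 * Z k ω)).le)
              (Finset.mem_univ j))
    have h2 : Real.log (G ω) ≤ G ω / N + (Real.log N - 1) := by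
      have h := Real.log_le_sub_one_of_pos (div_pos (hGpos ω) hN0)
      rw [Real.log_div (hGpos ω).ne' hN0.ne'] at h
      linarith
    have h3 : t0 * Z j ω ≤ G ω / N + (Real.log N - 1) := h1.trans h2
    calc Z j ω = t0⁻¹ * (t0 * Z j ω) := by field_simp
      _ ≤ t0⁻¹ * (G ω / N + (Real.log N - 1)) :=
          mul_le_mul_of_nonneg_left h3 (inv_nonneg.mpr ht0.le)
  by_cases hF : Integrable (fun ω => ⨆ j, Z j ω) (ℙ : Measure Ω)
  · have hHint : Integrable (fun ω => t0⁻¹ * (G ω / N + (Real.log N - 1))) (ℙ : Measure Ω) :=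
      ((hGint.div_const _).add (integrable_const _)).const_mul _
    calc (∫ ω, (⨆ j, Z j ω) ∂(ℙ : Measure Ω))
        ≤ ∫ ω, t0⁻¹ * (G ω / N + (Real.log N - 1)) ∂(ℙ : Measure Ω) :=
          integral_mono hF hHint hpt
      _ = t0⁻¹ * ((∫ ω, G ω ∂(ℙ : Measure Ω)) / N + (Real.log N - 1)) := by
          rw [integral_const_mul, integral_add (hGint.div_const _) (integrable_const _),
            integral_div, integral_const]
          simp
      _ ≤ t0⁻¹ * (1 + (Real.log N - 1)) := by
          refine mul_le_mul_of_nonneg_left ?_ (inv_nonneg.mpr ht0.le)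
          have : (∫ ω, G ω ∂(ℙ : Measure Ω)) / N ≤ 1 := (div_le_one hN0).mpr hGle
          linarith
      _ = (18 * B ^ 2 / n) * Real.log N := by
          rw [ht0def, inv_div]
          ring
      _ ≤ 18 * B ^ 2 * (Real.log N + 1) / n := by
          rw [div_mul_eq_mul_div]
          gcongr
          linarith
  · rw [integral_undef hF]
    apply div_nonneg _ hn0.le
    nlinarith
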